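/- For every simple regular expression E over an alphabet α and every symbol a ∈ α, the union of the languages of the Antimirov partial derivatives of E with respect to a equals the left quotient of L(E) by a: ⋃_{F ∈ ∂ₐ(E)} L(F) = a⁻¹(L(E)). -/

import Mathlib

open scoped Classical

/-- The Antimirov partial derivative of a regular expression with respect to a symbol. -/
noncomputable def aderiv {α : Type*} (a : α) : RegularExpression α → Set (RegularExpression α)
  | .zero => ∅
  | .epsilon => ∅
  | .char b => if b = a then {1} else ∅
  | .plus E₁ E₂ => aderiv a E₁ ∪ aderiv a E₂
  | .comp E₁ E₂ =>
      if [] ∈ E₁.matches' then ((· * E₂) '' aderiv a E₁) ∪ aderiv a E₂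
      else (· * E₂) '' aderiv a E₁
  | .star E₁ => (· * E₁.star) '' aderiv a E₁

/-- Iterated Antimirov partial derivative with respect to a word. -/
noncomputable def aderivWord {α : Type*} : List α → RegularExpression α → Set (RegularExpression α)
  | [], E => {E}
  | a :: w, E => ⋃ F ∈ aderiv a E, aderivWord w F

/-- Left quotient of a language by a word. -/
def lquot {α : Type*} (w : List α) (L : Language α) : Language α := {v | w ++ v ∈ L}

lemma matchEpsilon_iff {α : Type*} (E : RegularExpression α) :
    E.matchEpsilon = true ↔ [] ∈ E.matches' := by
  rw [← RegularExpression.rmatch_iff_matches']; rfl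

lemma mem_deriv_matches' {α : Type*} (a : α) (E : RegularExpression α) (v : List α) :
    v ∈ (E.deriv a).matches' ↔ a :: v ∈ E.matches' := by
  rw [← RegularExpression.rmatch_iff_matches', ← RegularExpression.rmatch_iff_matches']
  rfl

lemma mem_iUnion_prop {α : Type*} {p : Prop} {L : Language α} {v : List α} :
    v ∈ @Set.iUnion (List α) p (fun _ => L) ↔ p ∧ v ∈ L := Set.mem_iUnion.trans exists_prop

lemma aderiv_eq_deriv {α : Type*} (a : α) (E : RegularExpression α) :
    ⋃ F ∈ aderiv a E, F.matches' = (E.deriv a).matches' := by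
  induction E with
  | zero => simp [aderiv, RegularExpression.deriv]; ext v; simp [mem_iUnion_prop]; exact id
  | epsilon => simp [aderiv, RegularExpression.deriv]; ext v; simp [mem_iUnion_prop]; exact id
  | char b =>
    by_cases h : b = a
    · subst h; simp [aderiv]; ext v; simp [mem_iUnion_prop]; exact Iff.rfl
    · simp [aderiv, h, RegularExpression.deriv_char_of_ne h]; ext v; simp [mem_iUnion_prop, h]; exact id
  | plus E₁ E₂ ih₁ ih₂ =>
    show (⋃ F ∈ aderiv a E₁ ∪ aderiv a E₂, F.matches') = _
    refine (Set.biUnion_union _ _ _).trans ?_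
    rw [ih₁, ih₂,
      show (E₁.plus E₂).deriv a = E₁.deriv a + E₂.deriv a from rfl,
      RegularExpression.matches'_add]
    rfl
  | comp E₁ E₂ ih₁ ih₂ =>
    have him : (⋃ F ∈ (· * E₂) '' aderiv a E₁, F.matches')
        = (E₁.deriv a * E₂).matches' := by
      refine Set.biUnion_image.trans ?_
      rw [RegularExpression.matches'_mul, ← ih₁]
      ext v
      simp only [Set.mem_iUnion, mem_iUnion_prop, RegularExpression.matches'_mul, Language.mem_mul]
      constructor
      · rintro ⟨G, hG, t, ht, u, hu, rfl⟩
        exact ⟨t, Set.mem_iUnion.2 ⟨G, Set.mem_iUnion.2 ⟨hG, ht⟩⟩, u, hu, rfl⟩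
      · rintro ⟨t, ht, u, hu, rfl⟩
        obtain ⟨G, hG⟩ := Set.mem_iUnion.1 ht
        obtain ⟨hG', ht'⟩ := Set.mem_iUnion.1 hG
        exact ⟨G, hG', t, ht', u, hu, rfl⟩
    show (⋃ F ∈ (if [] ∈ E₁.matches' then ((· * E₂) '' aderiv a E₁) ∪ aderiv a E₂
      else (· * E₂) '' aderiv a E₁), F.matches')
      = ((E₁.comp E₂).deriv a).matches'
    have hd : (E₁.comp E₂).deriv a
        = if E₁.matchEpsilon then E₁.deriv a * E₂ + E₂.deriv a else E₁.deriv a * E₂ := rfl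
    by_cases h : [] ∈ E₁.matches'
    · rw [if_pos h, hd, if_pos ((matchEpsilon_iff E₁).2 h)]
      refine (Set.biUnion_union _ _ _).trans ?_
      rw [him, ih₂,
        RegularExpression.matches'_add]
      rfl
    · rw [if_neg h, hd, if_neg (by simpa [matchEpsilon_iff] using h), him]
  | star E₁ ih₁ =>
    show (⋃ F ∈ (· * E₁.star) '' aderiv a E₁, F.matches') = _
    refine Set.biUnion_image.trans ?_
    ext v
    simp only [Set.mem_iUnion, mem_iUnion_prop, RegularExpression.deriv_star, RegularExpression.matches'_mul,
      Language.mem_mul]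
    constructor
    · rintro ⟨G, hG, t, ht, u, hu, rfl⟩
      refine ⟨t, ?_, u, hu, rfl⟩
      rw [← ih₁]; exact Set.mem_iUnion.2 ⟨G, Set.mem_iUnion.2 ⟨hG, ht⟩⟩
    · rintro ⟨t, ht, u, hu, rfl⟩
      rw [← ih₁] at ht
      obtain ⟨G, hG⟩ := Set.mem_iUnion.1 ht
      obtain ⟨hG', ht'⟩ := Set.mem_iUnion.1 hG
      exact ⟨G, hG', t, ht', u, hu, rfl⟩

theorem antimirov_deriv_lang {α : Type*} (a : α) (E : RegularExpression α) :
    ⋃ F ∈ aderiv a E, F.matches' = lquot [a] E.matches' := by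
  rw [aderiv_eq_deriv]
  ext v
  exact (mem_deriv_matches' a E v).trans Iff.rfl
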